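/- arXiv:2505.20799 — 2 statements merged into one kernel-verified Lean document; each statement's English description precedes it below -/
import Mathlib

section
/- For any real numbers a_1,…,a_n, any p_1,…,p_n ∈ [0,1], and any real r ≥ 3, one has (Σ_i p_i |a_i|^r)^{1/r} ≤ e^6 max_i |a_i| + e^{−r} (Σ_i p_i a_i²)^{1/2}. -/
open Real

theorem stmt1 (n : ℕ) (a p : Fin n → ℝ) (hp : ∀ i, p i ∈ Set.Icc (0:ℝ) 1)
    (r : ℝ) (hr : 3 ≤ r) :
    (∑ i, p i * |a i| ^ r) ^ (1 / r) ≤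
      Real.exp 6 * (⨆ i, |a i|) +
        Real.exp (-r) * Real.sqrt (∑ i, p i * (a i) ^ 2) := by
  set M := ⨆ i, |a i| with hMdef
  have hM0 : 0 ≤ M := Real.iSup_nonneg (fun i => abs_nonneg _)
  have hMa : ∀ i, |a i| ≤ M := fun i => le_ciSup (Set.Finite.bddAbove (Set.finite_range (fun j => |a j|))) i
  have hr0 : 0 < r := by linarith
  have hr2 : (0:ℝ) ≤ r - 2 := by linarith
  set T := ∑ i, p i * (a i) ^ 2 with hTdef
  have hT0 : 0 ≤ T := Finset.sum_nonneg fun i _ => mul_nonneg (hp i).1 (sq_nonneg _)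
  set S := Real.sqrt T with hSdef
  have hS0 : 0 ≤ S := Real.sqrt_nonneg _
  have hS2 : S ^ (2:ℝ) = T := by
    rw [Real.rpow_two]; exact Real.sq_sqrt hT0
  have hsum0 : 0 ≤ ∑ i, p i * |a i| ^ r :=
    Finset.sum_nonneg fun i _ => mul_nonneg (hp i).1 (Real.rpow_nonneg (abs_nonneg _) _)
  have key : (∑ i, p i * |a i| ^ r) ≤ M ^ (r-2) * S ^ (2:ℝ) := by
    rw [hS2, hTdef, Finset.mul_sum]
    apply Finset.sum_le_sum
    intro i _
    have h1 : |a i| ^ r = |a i| ^ (r-2) * |a i| ^ (2:ℝ) := by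
      have := Real.rpow_add' (abs_nonneg (a i)) (show (r-2) + 2 ≠ 0 by linarith)
      rw [show (r-2) + 2 = r by ring] at this
      exact this
    have h3 : |a i| ^ (2:ℝ) = (a i) ^ 2 := by rw [Real.rpow_two, sq_abs]
    have h2 : |a i| ^ (r-2) ≤ M ^ (r-2) :=
      Real.rpow_le_rpow (abs_nonneg _) (hMa i) hr2
    calc p i * |a i| ^ r = |a i| ^ (r-2) * (p i * (a i) ^ 2) := by rw [h1, h3]; ring
      _ ≤ M ^ (r-2) * (p i * (a i) ^ 2) :=
        mul_le_mul_of_nonneg_right h2 (mul_nonneg (hp i).1 (sq_nonneg _))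
  have step : (∑ i, p i * |a i| ^ r) ^ (1/r) ≤ (M ^ (r-2) * S ^ (2:ℝ)) ^ (1/r) :=
    Real.rpow_le_rpow hsum0 key (by positivity)
  rcases le_or_gt S (Real.exp (3*r) * M) with hcase | hcase
  · -- S ≤ exp(3r) M : bound by exp 6 * M
    have h1 : M ^ (r-2) * S ^ (2:ℝ) ≤ Real.exp (6*r) * M ^ r := by
      have h2 : S ^ (2:ℝ) ≤ (Real.exp (3*r) * M) ^ (2:ℝ) :=
        Real.rpow_le_rpow hS0 hcase (by norm_num)
      have h3 : (Real.exp (3*r) * M) ^ (2:ℝ) = Real.exp (6*r) * M ^ (2:ℝ) := by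
        rw [Real.mul_rpow (Real.exp_pos _).le hM0, ← Real.exp_mul]
        ring_nf
      have h4 : M ^ (r-2) * M ^ (2:ℝ) = M ^ r := by
        have := Real.rpow_add' hM0 (show (r-2) + 2 ≠ 0 by linarith)
        rw [show (r-2) + 2 = r by ring] at this
        exact this.symm
      calc M ^ (r-2) * S ^ (2:ℝ) ≤ M ^ (r-2) * (Real.exp (3*r) * M) ^ (2:ℝ) :=
            mul_le_mul_of_nonneg_left h2 (Real.rpow_nonneg hM0 _)
        _ = Real.exp (6*r) * M ^ r := by rw [h3, ← mul_assoc, mul_comm (M ^ (r-2)), mul_assoc, h4]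
    have h5 : (Real.exp (6*r) * M ^ r) ^ (1/r) = Real.exp 6 * M := by
      rw [Real.mul_rpow (Real.exp_pos _).le (Real.rpow_nonneg hM0 _), ← Real.exp_mul,
        one_div, Real.rpow_rpow_inv hM0 hr0.ne']
      congr 1
      field_simp
    have h6 : (∑ i, p i * |a i| ^ r) ^ (1/r) ≤ Real.exp 6 * M := by
      calc (∑ i, p i * |a i| ^ r) ^ (1/r) ≤ (M ^ (r-2) * S ^ (2:ℝ)) ^ (1/r) := step
        _ ≤ (Real.exp (6*r) * M ^ r) ^ (1/r) := Real.rpow_le_rpow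
            (mul_nonneg (Real.rpow_nonneg hM0 _) (Real.rpow_nonneg hS0 _)) h1 (by positivity)
        _ = Real.exp 6 * M := h5
    have : 0 ≤ Real.exp (-r) * S := mul_nonneg (Real.exp_pos _).le hS0
    linarith
  · -- exp(3r) M < S : bound by exp(-r) S
    have hM' : M ≤ Real.exp (-(3*r)) * S := by
      have h2 := mul_le_mul_of_nonneg_left hcase.le (Real.exp_pos (-(3*r))).le
      rwa [← mul_assoc, ← Real.exp_add, neg_add_cancel, Real.exp_zero, one_mul] at h2
    have h1 : M ^ (r-2) * S ^ (2:ℝ) ≤ Real.exp (-(3*r)*(r-2)) * S ^ r := by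
      have h2 : M ^ (r-2) ≤ (Real.exp (-(3*r)) * S) ^ (r-2) :=
        Real.rpow_le_rpow hM0 hM' hr2
      have h3 : (Real.exp (-(3*r)) * S) ^ (r-2) = Real.exp (-(3*r)*(r-2)) * S ^ (r-2) := by
        rw [Real.mul_rpow (Real.exp_pos _).le hS0, ← Real.exp_mul]
      have h4 : S ^ (r-2) * S ^ (2:ℝ) = S ^ r := by
        have := Real.rpow_add' hS0 (show (r-2) + 2 ≠ 0 by linarith)
        rw [show (r-2) + 2 = r by ring] at this
        exact this.symm
      calc M ^ (r-2) * S ^ (2:ℝ) ≤ (Real.exp (-(3*r)) * S) ^ (r-2) * S ^ (2:ℝ) :=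
            mul_le_mul_of_nonneg_right h2 (Real.rpow_nonneg hS0 _)
        _ = Real.exp (-(3*r)*(r-2)) * S ^ r := by rw [h3, mul_assoc, h4]
    have h5 : (Real.exp (-(3*r)*(r-2)) * S ^ r) ^ (1/r) = Real.exp (-(3*(r-2))) * S := by
      rw [Real.mul_rpow (Real.exp_pos _).le (Real.rpow_nonneg hS0 _), ← Real.exp_mul,
        one_div, Real.rpow_rpow_inv hS0 hr0.ne']
      congr 1
      field_simp
    have h6 : (∑ i, p i * |a i| ^ r) ^ (1/r) ≤ Real.exp (-(3*(r-2))) * S := by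
      calc (∑ i, p i * |a i| ^ r) ^ (1/r) ≤ (M ^ (r-2) * S ^ (2:ℝ)) ^ (1/r) := step
        _ ≤ (Real.exp (-(3*r)*(r-2)) * S ^ r) ^ (1/r) := Real.rpow_le_rpow
            (mul_nonneg (Real.rpow_nonneg hM0 _) (Real.rpow_nonneg hS0 _)) h1 (by positivity)
        _ = Real.exp (-(3*(r-2))) * S := h5
    have h7 : Real.exp (-(3*(r-2))) * S ≤ Real.exp (-r) * S :=
      mul_le_mul_of_nonneg_right (Real.exp_le_exp.2 (by linarith)) hS0
    have : 0 ≤ Real.exp 6 * M := mul_nonneg (Real.exp_pos _).le hM0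
    linarith
end

section
/- Suppose (z_i)_{i=1}^n are reals with Σ_i min(|z_i|^α, z_i²) ≤ r for some 1 ≤ α ≤ 2 and r ≥ 1, and (y_{ij}) is an n×n array with max_i Σ_j y_{ij}² ≤ 1. Then for any n×n matrix A, |Σ_{i,j} a_{ij} z_i y_{ij}| ≤ r^{1/2} ‖A‖_F + r max_i (Σ_j a_{ij}²)^{1/2}. -/
theorem stmt10 (n : ℕ) (A : Matrix (Fin n) (Fin n) ℝ) (α r : ℝ)
    (hα1 : 1 ≤ α) (hα2 : α ≤ 2) (hr : 1 ≤ r)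
    (z : Fin n → ℝ) (y : Fin n → Fin n → ℝ)
    (hz : ∑ i, min (|z i| ^ α) ((z i) ^ 2) ≤ r)
    (hy : ∀ i, ∑ j, (y i j) ^ 2 ≤ 1) :
    |∑ i, ∑ j, A i j * z i * y i j| ≤
      r ^ ((1:ℝ) / 2) * Real.sqrt (∑ i, ∑ j, (A i j) ^ 2) +
        r * (⨆ i, Real.sqrt (∑ j, (A i j) ^ 2)) := by
  have hr0 : (0:ℝ) ≤ r := zero_le_one.trans hr
  set R : Fin n → ℝ := fun i => Real.sqrt (∑ j, (A i j) ^ 2) with hRdef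
  have hR0 : ∀ i, 0 ≤ R i := fun i => Real.sqrt_nonneg _
  have hS0 : 0 ≤ ⨆ i, R i := Real.iSup_nonneg hR0
  have hRS : ∀ i, R i ≤ ⨆ i, R i := fun i =>
    le_ciSup (Set.Finite.bddAbove (Set.finite_range R)) i
  have hRsq : ∀ i, R i ^ 2 = ∑ j, (A i j) ^ 2 := fun i =>
    Real.sq_sqrt (Finset.sum_nonneg fun j _ => sq_nonneg _)
  -- min facts
  have hmin0 : ∀ i, 0 ≤ min (|z i| ^ α) ((z i) ^ 2) :=
    fun i => le_min (Real.rpow_nonneg (abs_nonneg _) _) (sq_nonneg _)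
  have hsubsum : ∀ s : Finset (Fin n), ∑ i ∈ s, min (|z i| ^ α) ((z i) ^ 2) ≤ r := by
    intro s
    refine le_trans (Finset.sum_le_sum_of_subset_of_nonneg (Finset.subset_univ s)
      (fun i _ _ => hmin0 i)) hz
  -- Step 1: row-wise Cauchy-Schwarz
  have h1 : |∑ i, ∑ j, A i j * z i * y i j| ≤ ∑ i, |z i| * R i := by
    refine le_trans (Finset.abs_sum_le_sum_abs _ _) (Finset.sum_le_sum fun i _ => ?_)
    have he : ∑ j, A i j * z i * y i j = z i * ∑ j, A i j * y i j := by
      rw [Finset.mul_sum]; exact Finset.sum_congr rfl fun j _ => by ring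
    rw [he, abs_mul]
    refine mul_le_mul_of_nonneg_left ?_ (abs_nonneg _)
    have hcs : |∑ j, A i j * y i j| ≤ R i * Real.sqrt (∑ j, (y i j) ^ 2) := by
      rw [abs_le]
      constructor
      · have hcs2 := Real.sum_mul_le_sqrt_mul_sqrt Finset.univ (fun j => A i j)
          (fun j => -(y i j))
        have e1 : ∑ j, A i j * -(y i j) = -(∑ j, A i j * y i j) := by
          rw [← Finset.sum_neg_distrib]
          exact Finset.sum_congr rfl fun j _ => by ring
        have e2 : ∑ j, (-(y i j)) ^ 2 = ∑ j, (y i j) ^ 2 :=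
          Finset.sum_congr rfl fun j _ => by ring
        rw [e1, e2] at hcs2
        linarith
      · exact Real.sum_mul_le_sqrt_mul_sqrt Finset.univ (fun j => A i j) (fun j => y i j)
    refine hcs.trans ?_
    have : Real.sqrt (∑ j, (y i j) ^ 2) ≤ 1 := by
      rw [show (1:ℝ) = Real.sqrt 1 from (Real.sqrt_one).symm]
      exact Real.sqrt_le_sqrt (hy i)
    calc R i * Real.sqrt (∑ j, (y i j) ^ 2) ≤ R i * 1 :=
          mul_le_mul_of_nonneg_left this (hR0 i)
      _ = R i := mul_one _
  -- Split the index set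
  set T : Finset (Fin n) := Finset.univ.filter (fun i => |z i| ≤ 1) with hT
  have hsplit : ∑ i, |z i| * R i = ∑ i ∈ T, |z i| * R i + ∑ i ∈ Tᶜ, |z i| * R i :=
    (Finset.sum_add_sum_compl T _).symm
  -- Bound on T
  have hTz : ∀ i ∈ T, (z i) ^ 2 ≤ min (|z i| ^ α) ((z i) ^ 2) := by
    intro i hi
    have h1i : |z i| ≤ 1 := (Finset.mem_filter.mp hi).2
    have : |z i| ^ (2:ℝ) ≤ |z i| ^ α :=
      Real.rpow_le_rpow_of_exponent_ge' (abs_nonneg _) h1i (by linarith) hα2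
    rw [Real.rpow_two, sq_abs] at this
    exact le_min this le_rfl
  have hA : ∑ i ∈ T, |z i| * R i ≤ Real.sqrt r * Real.sqrt (∑ i, ∑ j, (A i j) ^ 2) := by
    refine le_trans (Real.sum_mul_le_sqrt_mul_sqrt T (fun i => |z i|) R) ?_
    refine mul_le_mul ?_ ?_ (Real.sqrt_nonneg _) (Real.sqrt_nonneg _)
    · refine Real.sqrt_le_sqrt ?_
      calc ∑ i ∈ T, |z i| ^ 2 = ∑ i ∈ T, (z i) ^ 2 :=
            Finset.sum_congr rfl fun i _ => sq_abs _
        _ ≤ ∑ i ∈ T, min (|z i| ^ α) ((z i) ^ 2) := Finset.sum_le_sum hTz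
        _ ≤ r := hsubsum T
    · refine Real.sqrt_le_sqrt ?_
      calc ∑ i ∈ T, R i ^ 2 = ∑ i ∈ T, ∑ j, (A i j) ^ 2 :=
            Finset.sum_congr rfl fun i _ => hRsq i
        _ ≤ ∑ i, ∑ j, (A i j) ^ 2 :=
            Finset.sum_le_sum_of_subset_of_nonneg (Finset.subset_univ T)
              (fun i _ _ => Finset.sum_nonneg fun j _ => sq_nonneg _)
  -- Bound on Tᶜ
  have hTcz : ∀ i ∈ Tᶜ, |z i| ≤ min (|z i| ^ α) ((z i) ^ 2) := by
    intro i hi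
    have h1i : 1 < |z i| := by
      have := Finset.mem_compl.mp hi
      simp only [hT, Finset.mem_filter, Finset.mem_univ, true_and] at this
      linarith [not_le.mp this]
    refine le_min ?_ ?_
    · have : |z i| ^ (1:ℝ) ≤ |z i| ^ α :=
        Real.rpow_le_rpow_of_exponent_le h1i.le hα1
      rwa [Real.rpow_one] at this
    · have hs : z i ^ 2 = |z i| ^ 2 := (sq_abs _).symm
      nlinarith [abs_nonneg (z i)]
  have hB : ∑ i ∈ Tᶜ, |z i| * R i ≤ r * ⨆ i, R i := by
    calc ∑ i ∈ Tᶜ, |z i| * R i ≤ ∑ i ∈ Tᶜ, |z i| * ⨆ i, R i :=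
          Finset.sum_le_sum fun i _ => mul_le_mul_of_nonneg_left (hRS i) (abs_nonneg _)
      _ = (∑ i ∈ Tᶜ, |z i|) * ⨆ i, R i := (Finset.sum_mul _ _ _).symm
      _ ≤ r * ⨆ i, R i := by
          refine mul_le_mul_of_nonneg_right ?_ hS0
          calc ∑ i ∈ Tᶜ, |z i| ≤ ∑ i ∈ Tᶜ, min (|z i| ^ α) ((z i) ^ 2) :=
                Finset.sum_le_sum hTcz
            _ ≤ r := hsubsum Tᶜ
  have hrpow : r ^ ((1:ℝ)/2) = Real.sqrt r := (Real.sqrt_eq_rpow r).symm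
  rw [hrpow]
  calc |∑ i, ∑ j, A i j * z i * y i j| ≤ ∑ i, |z i| * R i := h1
    _ = ∑ i ∈ T, |z i| * R i + ∑ i ∈ Tᶜ, |z i| * R i := hsplit
    _ ≤ Real.sqrt r * Real.sqrt (∑ i, ∑ j, (A i j) ^ 2) + r * ⨆ i, R i := add_le_add hA hB
end
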